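/- For the map p_m(z) = z^m on ℂ (m ≥ 1): for any w₁, w₂ ∈ ℂ, the multisets of m-th roots of w₁ and of w₂ can be paired as (x_j, y_j), j = 1,…,m, such that |x_j − y_j| ≤ C_m·|w₁ − w₂|^{1/m} for a constant C_m depending only on m. -/

import Mathlib

open Finset Polynomial

theorem stmt17 (m : ℕ) (hm : 1 ≤ m) :
    ∃ C > (0 : ℝ), ∀ w₁ w₂ : ℂ, ∃ x y : Fin m → ℂ,
      (∀ j, x j ^ m = w₁) ∧ (∀ j, y j ^ m = w₂) ∧
      (∀ z : ℂ, z ^ m = w₁ → ∃ j, x j = z) ∧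
      (∀ z : ℂ, z ^ m = w₂ → ∃ j, y j = z) ∧
      ∀ j, ‖x j - y j‖ ≤ C * ‖w₁ - w₂‖ ^ (1 / (m : ℝ)) := by
  have hm0 : m ≠ 0 := by omega
  have : NeZero m := ⟨hm0⟩
  refine ⟨1, one_pos, fun w₁ w₂ => ?_⟩
  obtain ⟨a, ha⟩ := IsAlgClosed.exists_pow_nat_eq (k := ℂ) (n := m) w₁ (Nat.pos_of_ne_zero hm0)
  obtain ⟨b, hb⟩ := IsAlgClosed.exists_pow_nat_eq (k := ℂ) (n := m) w₂ (Nat.pos_of_ne_zero hm0)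
  set ζ : ℂ := Complex.exp (2 * Real.pi * Complex.I / m) with hζdef
  have hζ : IsPrimitiveRoot ζ m := Complex.isPrimitiveRoot_exp m hm0
  have hζ1 : ζ ^ m = 1 := hζ.pow_eq_one
  have hζabs : ‖ζ‖ = 1 := by
    rw [hζdef, Complex.norm_exp]
    norm_num [Complex.div_re]
  -- product identity
  have hprod : ∏ i ∈ Finset.range m, (a - ζ ^ i * b) = w₁ - w₂ := by
    have h := X_pow_sub_C_eq_prod hζ (n := m) (by omega) hb
    have h2 := congrArg (Polynomial.eval a) h
    simpa [Polynomial.eval_prod, ha] using h2.symm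
  -- minimizing k
  obtain ⟨k, hk, hkmin⟩ := Finset.exists_min_image (Finset.range m)
    (fun i => ‖a - ζ ^ i * b‖) ⟨0, by simpa using Nat.pos_of_ne_zero hm0⟩
  set b' : ℂ := ζ ^ k * b with hb'def
  have hb' : b' ^ m = w₂ := by
    rw [hb'def, mul_pow, ← pow_mul, mul_comm k m, pow_mul, hζ1, one_pow, one_mul, hb]
  -- the key bound
  have hbound : ‖a - b'‖ ≤ ‖w₁ - w₂‖ ^ (1 / (m : ℝ)) := by
    have h1 : ‖a - b'‖ ^ m ≤ ‖w₁ - w₂‖ := by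
      calc ‖a - b'‖ ^ m
          = ∏ _i ∈ Finset.range m, ‖a - b'‖ := by
            rw [Finset.prod_const, Finset.card_range]
        _ ≤ ∏ i ∈ Finset.range m, ‖a - ζ ^ i * b‖ :=
            Finset.prod_le_prod (fun _ _ => by positivity) (fun i hi => hkmin i hi)
        _ = ‖∏ i ∈ Finset.range m, (a - ζ ^ i * b)‖ := by
            rw [norm_prod]
        _ = ‖w₁ - w₂‖ := by rw [hprod]
    calc ‖a - b'‖
        = (‖a - b'‖ ^ m) ^ ((m : ℝ)⁻¹) :=
          (Real.pow_rpow_inv_natCast (by positivity) hm0).symm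
      _ ≤ ‖w₁ - w₂‖ ^ ((m : ℝ)⁻¹) :=
          Real.rpow_le_rpow (by positivity) h1 (by positivity)
      _ = ‖w₁ - w₂‖ ^ (1 / (m : ℝ)) := by rw [one_div]
  refine ⟨fun j => ζ ^ (j : ℕ) * a, fun j => ζ ^ (j : ℕ) * b', ?_, ?_, ?_, ?_, ?_⟩
  · intro j
    rw [mul_pow, ← pow_mul, mul_comm (j : ℕ) m, pow_mul, hζ1, one_pow, one_mul, ha]
  · intro j
    rw [mul_pow, ← pow_mul, mul_comm (j : ℕ) m, pow_mul, hζ1, one_pow, one_mul, hb']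
  · intro z hz
    rcases eq_or_ne a 0 with h0 | h0
    · have : z = 0 := by
        have : z ^ m = 0 := by rw [hz, ← ha, h0, zero_pow hm0]
        exact pow_eq_zero_iff hm0 |>.mp this
      exact ⟨⟨0, Nat.pos_of_ne_zero hm0⟩, by simp [this, h0]⟩
    · have hza : (z / a) ^ m = 1 := by
        rw [div_pow, ha, hz, div_self]
        rw [← ha]; exact pow_ne_zero m h0
      obtain ⟨i, hi, hie⟩ := hζ.eq_pow_of_pow_eq_one hza
      exact ⟨⟨i, hi⟩, by simp only [hie]; field_simp⟩
  · intro z hz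
    rcases eq_or_ne b' 0 with h0 | h0
    · have : z = 0 := by
        have : z ^ m = 0 := by rw [hz, ← hb', h0, zero_pow hm0]
        exact pow_eq_zero_iff hm0 |>.mp this
      exact ⟨⟨0, Nat.pos_of_ne_zero hm0⟩, by simp [this, h0]⟩
    · have hza : (z / b') ^ m = 1 := by
        rw [div_pow, hb', hz, div_self]
        rw [← hb']; exact pow_ne_zero m h0
      obtain ⟨i, hi, hie⟩ := hζ.eq_pow_of_pow_eq_one hza
      exact ⟨⟨i, hi⟩, by simp only [hie]; field_simp⟩
  · intro j
    rw [one_mul, ← mul_sub, norm_mul, norm_pow, hζabs, one_pow, one_mul]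
    exact hbound
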